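/- Greedy splitting by pieces is not always optimal for bidirectional segmentation: there exists a sequence of tuples, a band-width Δ, and an error threshold ε such that every segmentation whose segment boundaries are restricted to piece boundaries has strictly smaller gain than the optimal unrestricted segmentation. -/

import Mathlib

/-- The interval `[a, b)` is monotone within `Δ` in the ascending sense. -/
def AscOK (t : ℕ → ℝ) (Δ : ℝ) (a b : ℕ) : Prop :=
  ∀ i j : ℕ, a ≤ i → i < j → j < b → t i - t j ≤ Δ

/-- The interval `[a, b)` is monotone within `Δ` in the descending sense. -/
def DescOK (t : ℕ → ℝ) (Δ : ℝ) (a b : ℕ) : Prop :=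
  ∀ i j : ℕ, a ≤ i → i < j → j < b → t j - t i ≤ Δ

/-- A pre-piece of the sequence `(t 0, …, t (n-1))`: a maximal contiguous interval
`[a, b)` that is monotone within `Δ` in the ascending or descending sense. -/
def IsPrePiece (t : ℕ → ℝ) (Δ : ℝ) (n a b : ℕ) : Prop :=
  a < b ∧ b ≤ n ∧
  ((AscOK t Δ a b ∧ (a = 0 ∨ ¬ AscOK t Δ (a - 1) b) ∧ (b = n ∨ ¬ AscOK t Δ a (b + 1))) ∨
   (DescOK t Δ a b ∧ (a = 0 ∨ ¬ DescOK t Δ (a - 1) b) ∧ (b = n ∨ ¬ DescOK t Δ a (b + 1))))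

/-- A piece boundary: an endpoint of the whole sequence or of some pre-piece.  Pieces
are the intervals between consecutive piece boundaries (separating overlaps of
pre-pieces), so a segmentation is piece-restricted iff all its cut points are
piece boundaries. -/
def PieceBoundary (t : ℕ → ℝ) (Δ : ℝ) (n i : ℕ) : Prop :=
  i = 0 ∨ i = n ∨ ∃ a b, IsPrePiece t Δ n a b ∧ (i = a ∨ i = b)

/-- A bidirectional monotonic band of length `k` inside the interval `[a, b)`:
a subsequence that is ascending within `Δ` or descending within `Δ`. -/
def IsBidBandOn (t : ℕ → ℝ) (Δ : ℝ) (a b k : ℕ) (f : Fin k → ℕ) : Prop :=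
  StrictMono f ∧ (∀ j, a ≤ f j ∧ f j < b) ∧
  ((∀ i j : Fin k, i < j → t (f i) - t (f j) ≤ Δ) ∨
   (∀ i j : Fin k, i < j → t (f j) - t (f i) ≤ Δ))

/-- The length of a longest (bidirectional) monotonic band in the segment `[a, b)`. -/
noncomputable def lmbLenOn (t : ℕ → ℝ) (Δ : ℝ) (a b : ℕ) : ℕ :=
  sSup { k : ℕ | ∃ f : Fin k → ℕ, IsBidBandOn t Δ a b k f }

/-- The gain of the segment `[a, b)`: `(|LMB| - |outliers|) · |S| = (2·|LMB| - |S|) · |S|`. -/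
noncomputable def gainOn (t : ℕ → ℝ) (Δ : ℝ) (a b : ℕ) : ℤ :=
  (2 * (lmbLenOn t Δ a b : ℤ) - ((b - a : ℕ) : ℤ)) * ((b - a : ℕ) : ℤ)

/-- Feasibility of the segment `[a, b)` for error threshold `ε`: some longest monotonic
band can be chosen so that every run of contiguous outliers has length at most `ε`. -/
def FeasibleOn (t : ℕ → ℝ) (Δ : ℝ) (ε : ℕ) (a b : ℕ) : Prop :=
  ∃ (k : ℕ) (f : Fin k → ℕ), IsBidBandOn t Δ a b k f ∧ k = lmbLenOn t Δ a b ∧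
    ∀ c d : ℕ, a ≤ c → c ≤ d → d < b →
      (∀ j : ℕ, c ≤ j → j ≤ d → ∀ m : Fin k, f m ≠ j) → d + 1 - c ≤ ε

def vEx : ℕ → ℤ
  | 0 => 1 | 1 => 0 | 2 => 0 | 3 => 2 | 4 => 2 | 5 => 0 | 6 => 1 | _ => 0

noncomputable def tEx : ℕ → ℝ := fun i => (vEx i : ℝ)

lemma tsub_iff (x y : ℕ) : tEx x - tEx y ≤ (1:ℝ) ↔ vEx x ≤ vEx y + 1 := by
  unfold tEx
  rw [sub_le_iff_le_add]
  rw [show (1:ℝ) + (vEx y : ℝ) = ((1 + vEx y : ℤ) : ℝ) by push_cast; ring, Int.cast_le]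
  omega

-- === generic band lemmas ===
lemma card_le_of_strictMono {k : ℕ} (f : Fin k → ℕ) (hf : StrictMono f)
    (s : Finset ℕ) (h : ∀ j, f j ∈ s) : k ≤ s.card := by
  have h1 : (Finset.univ.image f).card = k := by
    rw [Finset.card_image_of_injective _ hf.injective, Finset.card_univ, Fintype.card_fin]
  have h2 : Finset.univ.image f ⊆ s := by
    intro x hx
    obtain ⟨j, _, rfl⟩ := Finset.mem_image.mp hx
    exact h j
  calc k = (Finset.univ.image f).card := h1.symm
    _ ≤ s.card := Finset.card_le_card h2

lemma band_le {t : ℕ → ℝ} {Δ : ℝ} {a b k : ℕ} {f : Fin k → ℕ}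
    (h : IsBidBandOn t Δ a b k f) : k ≤ b - a := by
  have := card_le_of_strictMono f h.1 (Finset.Ico a b)
    (fun j => Finset.mem_Ico.mpr (h.2.1 j))
  simpa using this

lemma exists_hit {t : ℕ → ℝ} {Δ : ℝ} {a b k : ℕ} {f : Fin k → ℕ}
    (h : IsBidBandOn t Δ a b k f) (s : Finset ℕ)
    (hcard : ((Finset.Ico a b) \ s).card < k) : ∃ j, f j ∈ s := by
  by_contra hc
  push_neg at hc
  have := card_le_of_strictMono f h.1 ((Finset.Ico a b) \ s) (fun j =>
    Finset.mem_sdiff.mpr ⟨Finset.mem_Ico.mpr (h.2.1 j), hc j⟩)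
  omega

lemma zero_band (t : ℕ → ℝ) (Δ : ℝ) (a b : ℕ) :
    0 ∈ { k : ℕ | ∃ f : Fin k → ℕ, IsBidBandOn t Δ a b k f } :=
  ⟨fun i => i.elim0, fun i => i.elim0, fun j => j.elim0, Or.inl fun i => i.elim0⟩

lemma lmb_le {t : ℕ → ℝ} {Δ : ℝ} {a b K : ℕ}
    (h : ∀ k (f : Fin k → ℕ), IsBidBandOn t Δ a b k f → k ≤ K) :
    lmbLenOn t Δ a b ≤ K := by
  apply csSup_le ⟨0, zero_band t Δ a b⟩
  rintro k ⟨f, hf⟩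
  exact h k f hf

lemma le_lmb {t : ℕ → ℝ} {Δ : ℝ} {a b k : ℕ} {f : Fin k → ℕ}
    (h : IsBidBandOn t Δ a b k f) : k ≤ lmbLenOn t Δ a b := by
  refine le_csSup ⟨b - a, ?_⟩ ⟨f, h⟩
  rintro x ⟨g, hg⟩
  exact band_le hg

lemma lmb_le_card (t : ℕ → ℝ) (Δ : ℝ) (a b : ℕ) : lmbLenOn t Δ a b ≤ b - a :=
  lmb_le fun _ _ hf => band_le hf

-- === upper bounds on lmb for the example ===
lemma no_big_band {a b k : ℕ} {f : Fin k → ℕ}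
    (hf : IsBidBandOn tEx 1 a b k f)
    (s1 s2 r1 r2 : Finset ℕ)
    (h1 : ((Finset.Ico a b) \ s1).card < k) (h2 : ((Finset.Ico a b) \ s2).card < k)
    (h3 : ((Finset.Ico a b) \ r1).card < k) (h4 : ((Finset.Ico a b) \ r2).card < k)
    (hs : ∀ x ∈ s1, ∀ y ∈ s2, x < y ∧ vEx y + 1 < vEx x)
    (hr : ∀ x ∈ r1, ∀ y ∈ r2, x < y ∧ vEx x + 1 < vEx y) : False := by
  obtain ⟨hmono, hbound, hband⟩ := hf
  rcases hband with hasc | hdesc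
  · obtain ⟨j1, hj1⟩ := exists_hit ⟨hmono, hbound, Or.inl hasc⟩ s1 h1
    obtain ⟨j2, hj2⟩ := exists_hit ⟨hmono, hbound, Or.inl hasc⟩ s2 h2
    obtain ⟨hlt, hv⟩ := hs _ hj1 _ hj2
    have hj : j1 < j2 := hmono.lt_iff_lt.mp hlt
    have := (tsub_iff _ _).mp (hasc j1 j2 hj)
    omega
  · obtain ⟨j1, hj1⟩ := exists_hit ⟨hmono, hbound, Or.inr hdesc⟩ r1 h3
    obtain ⟨j2, hj2⟩ := exists_hit ⟨hmono, hbound, Or.inr hdesc⟩ r2 h4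
    obtain ⟨hlt, hv⟩ := hr _ hj1 _ hj2
    have hj : j1 < j2 := hmono.lt_iff_lt.mp hlt
    have := (tsub_iff _ _).mp (hdesc j1 j2 hj)
    omega

lemma lmb08_le : lmbLenOn tEx 1 0 8 ≤ 6 := by
  apply lmb_le
  intro k f hf
  by_contra hk
  push_neg at hk
  refine no_big_band hf {3,4} {5,7} {1,2} {3,4} ?_ ?_ ?_ ?_ ?_ ?_
  · have : ((Finset.Ico 0 8) \ ({3,4} : Finset ℕ)).card = 6 := by decide
    omega
  · have : ((Finset.Ico 0 8) \ ({5,7} : Finset ℕ)).card = 6 := by decide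
    omega
  · have : ((Finset.Ico 0 8) \ ({1,2} : Finset ℕ)).card = 6 := by decide
    omega
  · have : ((Finset.Ico 0 8) \ ({3,4} : Finset ℕ)).card = 6 := by decide
    omega
  · decide
  · decide

lemma lmb07_le : lmbLenOn tEx 1 0 7 ≤ 6 := by
  apply lmb_le
  intro k f hf
  by_contra hk
  push_neg at hk
  refine no_big_band hf {3,4} {5} {1,2} {3,4} ?_ ?_ ?_ ?_ ?_ ?_
  · have : ((Finset.Ico 0 7) \ ({3,4} : Finset ℕ)).card = 5 := by decide
    omega
  · have : ((Finset.Ico 0 7) \ ({5} : Finset ℕ)).card = 6 := by decide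
    omega
  · have : ((Finset.Ico 0 7) \ ({1,2} : Finset ℕ)).card = 5 := by decide
    omega
  · have : ((Finset.Ico 0 7) \ ({3,4} : Finset ℕ)).card = 5 := by decide
    omega
  · decide
  · decide

-- === the two left-hand segments ===
def f6 : Fin 6 → ℕ := fun j => if (j : ℕ) < 5 then (j : ℕ) else 6

lemma f6_band : IsBidBandOn tEx 1 0 7 6 f6 := by
  refine ⟨?_, ?_, Or.inl ?_⟩
  · intro i j hij
    simp only [f6]
    split <;> split <;> omega
  · intro j
    simp only [f6]
    split <;> omega
  · intro i j hij
    rw [tsub_iff]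
    revert i j hij
    decide

lemma lmb07 : lmbLenOn tEx 1 0 7 = 6 :=
  le_antisymm lmb07_le (le_lmb f6_band)

def f1 : Fin 1 → ℕ := fun _ => 7

lemma f1_band : IsBidBandOn tEx 1 7 8 1 f1 := by
  refine ⟨?_, ?_, Or.inl ?_⟩
  · intro i j hij
    exact absurd hij (by omega)
  · intro j
    simp [f1]
  · intro i j hij
    exact absurd hij (by omega)

lemma lmb78 : lmbLenOn tEx 1 7 8 = 1 :=
  le_antisymm (lmb_le_card tEx 1 7 8) (le_lmb f1_band)

lemma feas07 : FeasibleOn tEx 1 1 0 7 := by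
  refine ⟨6, f6, f6_band, lmb07.symm, ?_⟩
  intro c d hc hcd hd hmiss
  have hit : ∀ j, j < 7 → j ≠ 5 → ∃ m : Fin 6, f6 m = j := by decide
  have hc5 : c = 5 := by
    by_contra h
    obtain ⟨m, hm⟩ := hit c (by omega) h
    exact hmiss c le_rfl hcd m hm
  have hd5 : d = 5 := by
    by_contra h
    obtain ⟨m, hm⟩ := hit d (by omega) h
    exact hmiss d hcd le_rfl m hm
  omega

lemma feas78 : FeasibleOn tEx 1 1 7 8 := by
  refine ⟨1, f1, f1_band, lmb78.symm, ?_⟩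
  intro c d hc hcd hd hmiss
  exact absurd rfl (hmiss 7 (by omega) (by omega) 0)

def Phi : ℕ → ℤ
  | 0 => 0 | 3 => 9 | 5 => 25 | 8 => 35 | _ => 0

lemma gain_le_sq (a b : ℕ) : gainOn tEx 1 a b ≤ ((b-a:ℕ):ℤ) * ((b-a:ℕ):ℤ) := by
  have hc := lmb_le_card tEx 1 a b
  have hc' : ((lmbLenOn tEx 1 a b : ℤ)) ≤ ((b-a:ℕ):ℤ) := by exact_mod_cast hc
  have hL : (0:ℤ) ≤ ((b-a:ℕ):ℤ) := Int.ofNat_nonneg _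
  unfold gainOn
  nlinarith

lemma gain08 : gainOn tEx 1 0 8 ≤ 32 := by
  have hc := lmb08_le
  unfold gainOn
  have : ((8 - 0 : ℕ):ℤ) = 8 := by norm_num
  rw [this]
  omega

lemma seg_bound {a b : ℕ} (ha : a = 0 ∨ a = 3 ∨ a = 5 ∨ a = 8)
    (hb : b = 0 ∨ b = 3 ∨ b = 5 ∨ b = 8) (hab : a < b) :
    gainOn tEx 1 a b ≤ Phi b - Phi a := by
  rcases ha with rfl | rfl | rfl | rfl <;> rcases hb with rfl | rfl | rfl | rfl <;>
    first
      | omega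
      | exact le_trans (gain08) (by norm_num [Phi])
      | exact le_trans (gain_le_sq _ _) (by norm_num [Phi])

def AscZ (a b : ℕ) : Prop := ∀ j, j < b → ∀ i, i < j → a ≤ i → vEx i ≤ vEx j + 1
def DescZ (a b : ℕ) : Prop := ∀ j, j < b → ∀ i, i < j → a ≤ i → vEx j ≤ vEx i + 1

instance (a b : ℕ) : Decidable (AscZ a b) := by unfold AscZ; infer_instance
instance (a b : ℕ) : Decidable (DescZ a b) := by unfold DescZ; infer_instance

lemma ascOK_iff (a b : ℕ) : AscOK tEx 1 a b ↔ AscZ a b := by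
  constructor
  · intro h j hj i hij hai
    exact (tsub_iff i j).mp (h i j hai hij hj)
  · intro h i j hai hij hj
    exact (tsub_iff i j).mpr (h j hj i hij hai)

lemma descOK_iff (a b : ℕ) : DescOK tEx 1 a b ↔ DescZ a b := by
  constructor
  · intro h j hj i hij hai
    exact (tsub_iff j i).mp (h i j hai hij hj)
  · intro h i j hai hij hj
    exact (tsub_iff j i).mpr (h j hj i hij hai)

def PreZ (a b : ℕ) : Prop :=
  ((AscZ a b ∧ (a = 0 ∨ ¬ AscZ (a-1) b) ∧ (b = 8 ∨ ¬ AscZ a (b+1))) ∨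
   (DescZ a b ∧ (a = 0 ∨ ¬ DescZ (a-1) b) ∧ (b = 8 ∨ ¬ DescZ a (b+1))))

def ConclZ (a b : ℕ) : Prop := (a = 0 ∨ a = 3 ∨ a = 5) ∧ (b = 3 ∨ b = 5 ∨ b = 8)

instance (a b : ℕ) : Decidable (PreZ a b) := by unfold PreZ; infer_instance
instance (a b : ℕ) : Decidable (ConclZ a b) := by unfold ConclZ; infer_instance

lemma prepieceZ : ∀ b, b < 9 → ∀ a, a < b → PreZ a b → ConclZ a b := by decide

lemma boundary_mem {i : ℕ} (h : PieceBoundary tEx 1 8 i) :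
    i = 0 ∨ i = 3 ∨ i = 5 ∨ i = 8 := by
  rcases h with rfl | rfl | ⟨a, b, ⟨hab, hb8, hdisj⟩, hi⟩
  · exact Or.inl rfl
  · exact Or.inr (Or.inr (Or.inr rfl))
  · simp only [ascOK_iff, descOK_iff] at hdisj
    have hz : PreZ a b := hdisj
    have := prepieceZ b (by omega) a hab hz
    obtain ⟨ha, hb⟩ := this
    rcases hi with rfl | rfl <;> omega


/-- greedy splitting by pieces is not always optimal for bidirectional
segmentation: there is a sequence, a band-width `Δ > 0` and a threshold `ε` with a
feasible segmentation whose gain strictly exceeds the gain of every feasible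
segmentation whose cut points are all piece boundaries. -/
theorem stmt_16 :
    ∃ (n : ℕ) (t : ℕ → ℝ) (Δ : ℝ) (ε : ℕ), 0 < Δ ∧
      ∃ (m : ℕ) (c : Fin (m + 1) → ℕ), StrictMono c ∧ c 0 = 0 ∧ c (Fin.last m) = n ∧
        (∀ k : Fin m, FeasibleOn t Δ ε (c k.castSucc) (c k.succ)) ∧
        ∀ (m' : ℕ) (c' : Fin (m' + 1) → ℕ), StrictMono c' → c' 0 = 0 →
          c' (Fin.last m') = n →
          (∀ k : Fin m', FeasibleOn t Δ ε (c' k.castSucc) (c' k.succ)) →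
          (∀ k : Fin (m' + 1), PieceBoundary t Δ n (c' k)) →
          (∑ k : Fin m', gainOn t Δ (c' k.castSucc) (c' k.succ)) <
          (∑ k : Fin m, gainOn t Δ (c k.castSucc) (c k.succ)) := by
  refine ⟨8, tEx, 1, 1, one_pos, 2, ![0, 7, 8], ?_, rfl, rfl, ?_, ?_⟩
  · intro i j hij
    fin_cases i <;> fin_cases j <;> simp_all
  · intro k
    fin_cases k
    · exact feas07
    · exact feas78
  · intro m' c' hmono h0 hlast hfeas hpb
    have hL : (∑ k : Fin 2, gainOn tEx 1 ((![0,7,8] : Fin 3 → ℕ) k.castSucc)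
        ((![0,7,8] : Fin 3 → ℕ) k.succ)) = 36 := by
      rw [Fin.sum_univ_two]
      have e1 : gainOn tEx 1 0 7 = 35 := by unfold gainOn; rw [lmb07]; norm_num
      have e2 : gainOn tEx 1 7 8 = 1 := by unfold gainOn; rw [lmb78]; norm_num
      show gainOn tEx 1 0 7 + gainOn tEx 1 7 8 = 36
      rw [e1, e2]
      norm_num
    rw [hL]
    have hbound : ∀ k : Fin m', gainOn tEx 1 (c' k.castSucc) (c' k.succ) ≤
        Phi (c' k.succ) - Phi (c' k.castSucc) := fun k =>
      seg_bound (boundary_mem (hpb k.castSucc)) (boundary_mem (hpb k.succ))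
        (hmono (Fin.castSucc_lt_succ : k.castSucc < k.succ))
    have hsum : (∑ k : Fin m', gainOn tEx 1 (c' k.castSucc) (c' k.succ)) ≤
        ∑ k : Fin m', (Phi (c' k.succ) - Phi (c' k.castSucc)) :=
      Finset.sum_le_sum (fun k _ => hbound k)
    set G : ℕ → ℤ := fun i => if h : i < m' + 1 then Phi (c' ⟨i, h⟩) else 0 with hG
    have h1 : ∀ k : Fin m', Phi (c' k.succ) - Phi (c' k.castSucc) = G (↑k + 1) - G ↑k := by
      intro k
      have hk1 : (↑k + 1) < m' + 1 := by omega
      have hk0 : (↑k : ℕ) < m' + 1 := by omega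
      simp only [hG, dif_pos hk1, dif_pos hk0]
      rfl
    have hTel : ∑ k : Fin m', (Phi (c' k.succ) - Phi (c' k.castSucc)) = G m' - G 0 := by
      rw [Finset.sum_congr rfl (fun k _ => h1 k)]
      rw [Fin.sum_univ_eq_sum_range (fun i => G (i + 1) - G i) m']
      exact Finset.sum_range_sub G m'
    have hG0 : G 0 = 0 := by
      have : (⟨0, by omega⟩ : Fin (m' + 1)) = 0 := rfl
      simp only [hG, dif_pos (by omega : 0 < m' + 1), this, h0]
      rfl
    have hGm : G m' = 35 := by
      have : (⟨m', by omega⟩ : Fin (m' + 1)) = Fin.last m' := rfl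
      simp only [hG, dif_pos (by omega : m' < m' + 1), this, hlast]
      rfl
    omega
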